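/- Let X be a separable Banach space, Y a Banach space, G ⊂ X closed, f : X → Y with ‖f(x)−f(y)‖ ≤ L‖x−y‖ for y ∈ G, x ∈ B(y,δ), and w ∈ G. Then there exists an L-Lipschitz map H : X → ℓ∞ such that for every x ∈ G ∩ B(w, δ/4) at which d_G is Gâteaux differentiable and every 0 ≠ v ∈ X, O(f,x,v) = O(H,x,v). -/

import Mathlib

open Metric Topology Filter
open scoped ENNReal NNReal

/-- The oscillation `O(f,x,v)` of Preiss–Zajíček, computed in `ℝ≥0∞`. -/
noncomputable def oscDir {X Y : Type*} [NormedAddCommGroup X] [NormedSpace ℝ X]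
    [NormedAddCommGroup Y] [NormedSpace ℝ Y] (f : X → Y) (x v : X) : ℝ≥0∞ :=
  ⨅ (ε : ℝ) (_ : 0 < ε),
    ⨆ (t : ℝ) (s : ℝ) (_ : 0 < |t| ∧ |t| < ε ∧ 0 < |s| ∧ |s| < ε),
      (‖t⁻¹ • (f (x + t • v) - f x) - s⁻¹ • (f (x + s • v) - f x)‖₊ : ℝ≥0∞)

/-- `g : X → ℝ` is Gâteaux differentiable at `x`. -/
def GateauxDiffAt {X : Type*} [NormedAddCommGroup X] [NormedSpace ℝ X]
    (g : X → ℝ) (x : X) : Prop :=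
  ∃ T : X →L[ℝ] ℝ, ∀ u : X,
    Tendsto (fun t : ℝ => t⁻¹ * (g (x + t • u) - g x)) (𝓝[≠] 0) (𝓝 (T u))

private lemma norming_sup {Y : Type*} [NormedAddCommGroup Y] [NormedSpace ℝ Y]
    (y : ℕ → Y) (φ : ℕ → Y →L[ℝ] ℝ) (hφ1 : ∀ n, ‖φ n‖ ≤ 1)
    (hφ2 : ∀ n, φ n (y n) = ‖y n‖) {z : Y} (hz : z ∈ closure (Set.range y)) :
    (⨆ n, ‖(φ n) z‖) = ‖z‖ := by
  have hbdd : ∀ n, ‖(φ n) z‖ ≤ ‖z‖ := fun n =>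
    le_trans ((φ n).le_opNorm z) (mul_le_of_le_one_left (norm_nonneg z) (hφ1 n))
  refine le_antisymm (ciSup_le hbdd) (le_of_forall_sub_le fun ε hε => ?_)
  obtain ⟨_, ⟨n, rfl⟩, hn⟩ := Metric.mem_closure_iff.mp hz (ε/2) (by linarith)
  have hzn : ‖z - y n‖ < ε/2 := by rwa [← dist_eq_norm]
  have h1 : ‖z‖ - ε/2 ≤ ‖y n‖ := by
    have := norm_sub_norm_le z (y n); linarith
  have h2 : (‖y n‖ : ℝ) ≤ ‖(φ n) z‖ + ε/2 := by
    have e1 : (φ n) (y n) = (φ n) z - (φ n) (z - y n) := by rw [map_sub]; ring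
    have e2 : ‖(φ n) (z - y n)‖ ≤ ‖z - y n‖ :=
      le_trans ((φ n).le_opNorm _) (mul_le_of_le_one_left (norm_nonneg _) (hφ1 n))
    have e3 : (φ n) (y n) ≤ ‖(φ n) z‖ + ‖(φ n) (z - y n)‖ := by
      rw [e1]
      calc (φ n) z - (φ n) (z - y n) ≤ |(φ n) z| + |(φ n) (z - y n)| := by
            have := le_abs_self ((φ n) z)
            have := neg_abs_le ((φ n) (z - y n))
            linarith
        _ = ‖(φ n) z‖ + ‖(φ n) (z - y n)‖ := by rw [Real.norm_eq_abs, Real.norm_eq_abs]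
    have e4 : (‖y n‖ : ℝ) = (φ n) (y n) := (hφ2 n).symm
    rw [e4]
    linarith
  have h3 : ‖(φ n) z‖ ≤ ⨆ m, ‖(φ m) z‖ :=
    le_ciSup ⟨‖z‖, Set.forall_mem_range.mpr hbdd⟩ n
  linarith

private lemma oscDir_aux_triangle {W : Type*} [NormedAddCommGroup W] (A B a b : W) (r1 r2 : ℝ)
    (h1 : ‖A - a‖ ≤ r1) (h2 : ‖B - b‖ ≤ r2) : |‖A - B‖ - ‖a - b‖| ≤ r1 + r2 := by
  have h3 : ‖(A - B) - (a - b)‖ ≤ r1 + r2 := by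
    have he : (A - B) - (a - b) = (A - a) - (B - b) := by abel
    rw [he]; exact (norm_sub_le _ _).trans (add_le_add h1 h2)
  exact (abs_norm_sub_norm_le _ _).trans h3

private lemma oscDir_le_of_approx {X Y Z : Type*} [NormedAddCommGroup X] [NormedSpace ℝ X]
    [NormedAddCommGroup Y] [NormedSpace ℝ Y] [NormedAddCommGroup Z] [NormedSpace ℝ Z]
    (f : X → Y) (g : X → Z) (x v : X)
    (h : ∀ η : ℝ, 0 < η → ∃ ε₀ > 0, ∀ t s : ℝ,
      0 < |t| → |t| < ε₀ → 0 < |s| → |s| < ε₀ →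
      ‖t⁻¹ • (f (x + t • v) - f x) - s⁻¹ • (f (x + s • v) - f x)‖ ≤
        ‖t⁻¹ • (g (x + t • v) - g x) - s⁻¹ • (g (x + s • v) - g x)‖ + η) :
    oscDir f x v ≤ oscDir g x v := by
  refine ENNReal.le_of_forall_pos_le_add fun η hη _ => ?_
  obtain ⟨ε₀, hε₀, hkey⟩ := h η (by exact_mod_cast hη)
  rw [oscDir, oscDir]
  simp only [ENNReal.iInf_add]
  refine le_iInf fun ε => le_iInf fun hε => ?_
  have hmin : 0 < min ε ε₀ := lt_min hε hε₀
  refine le_trans (iInf_le _ (min ε ε₀)) (le_trans (iInf_le _ hmin) ?_)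
  refine iSup_le fun t => iSup_le fun s => iSup_le fun hc => ?_
  obtain ⟨ht0, htε, hs0, hsε⟩ := hc
  have hreal := hkey t s ht0 (lt_of_lt_of_le htε (min_le_right _ _)) hs0
    (lt_of_lt_of_le hsε (min_le_right _ _))
  have hnn : ‖t⁻¹ • (f (x + t • v) - f x) - s⁻¹ • (f (x + s • v) - f x)‖₊ ≤
      ‖t⁻¹ • (g (x + t • v) - g x) - s⁻¹ • (g (x + s • v) - g x)‖₊ + η := by
    rw [← NNReal.coe_le_coe]
    push_cast
    simpa using hreal
  calc (‖t⁻¹ • (f (x + t • v) - f x) - s⁻¹ • (f (x + s • v) - f x)‖₊ : ℝ≥0∞)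
      ≤ (‖t⁻¹ • (g (x + t • v) - g x) - s⁻¹ • (g (x + s • v) - g x)‖₊ : ℝ≥0∞) + η := by
        rw [← ENNReal.coe_add]; exact_mod_cast hnn
    _ ≤ (⨆ (t' : ℝ) (s' : ℝ) (_ : 0 < |t'| ∧ |t'| < ε ∧ 0 < |s'| ∧ |s'| < ε),
          (‖t'⁻¹ • (g (x + t' • v) - g x) - s'⁻¹ • (g (x + s' • v) - g x)‖₊ : ℝ≥0∞)) + η := by
        refine add_le_add ?_ le_rfl
        refine le_iSup_of_le t (le_iSup_of_le s (le_iSup_of_le ?_ le_rfl))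
        exact ⟨ht0, lt_of_lt_of_le htε (min_le_left _ _), hs0,
          lt_of_lt_of_le hsε (min_le_left _ _)⟩

set_option maxHeartbeats 2000000 in
theorem exists_lipschitz_extension_same_osc
    {X Y : Type*} [NormedAddCommGroup X] [NormedSpace ℝ X] [CompleteSpace X]
    [TopologicalSpace.SeparableSpace X]
    [NormedAddCommGroup Y] [NormedSpace ℝ Y] [CompleteSpace Y]
    (G : Set X) (hG : IsClosed G) (f : X → Y) (L δ : ℝ) (hL : 0 < L) (hδ : 0 < δ)
    (hf : ∀ y ∈ G, ∀ x : X, ‖x - y‖ < δ → ‖f x - f y‖ ≤ L * ‖x - y‖)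
    (w : X) (hw : w ∈ G) :
    ∃ H : X → lp (fun _ : ℕ => ℝ) ∞, LipschitzWith (Real.toNNReal L) H ∧
      ∀ x ∈ G ∩ Metric.ball w (δ / 4),
        GateauxDiffAt (fun z => Metric.infDist z G) x →
        ∀ v : X, v ≠ 0 → oscDir f x v = oscDir H x v := by
  classical
  have hL0 : (0:ℝ) ≤ L := hL.le
  set S : Set X := G ∩ Metric.ball w (δ / 4) with hS
  have hwS : w ∈ S := ⟨hw, Metric.mem_ball_self (by positivity)⟩
  have hfS : ∀ a ∈ S, ∀ b ∈ S, ‖f a - f b‖ ≤ L * ‖a - b‖ := by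
    intro a ha b hb
    apply hf b hb.1 a
    have h1 : dist a w < δ/4 := ha.2
    have h2 : dist b w < δ/4 := hb.2
    calc ‖a - b‖ = dist a b := (dist_eq_norm a b).symm
      _ ≤ dist a w + dist b w := dist_triangle_right a b w
      _ < δ := by linarith
  have hSsep : TopologicalSpace.IsSeparable S := TopologicalSpace.IsSeparable.of_separableSpace S
  haveI : TopologicalSpace.SeparableSpace S := hSsep.separableSpace
  haveI : Nonempty S := ⟨⟨w, hwS⟩⟩
  obtain ⟨u, hu⟩ := TopologicalSpace.exists_dense_seq S
  set T : Set Y := (fun a => f a - f w) '' S with hT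
  have hTsep : TopologicalSpace.IsSeparable T := by
    refine ⟨Set.range (fun n => f (u n : X) - f w), Set.countable_range _, ?_⟩
    rintro _ ⟨a, haS, rfl⟩
    rw [Metric.mem_closure_iff]
    intro ε hε
    obtain ⟨n, hn⟩ := Metric.denseRange_iff.mp hu ⟨a, haS⟩ (ε / (L+1)) (by positivity)
    refine ⟨f (u n) - f w, ⟨n, rfl⟩, ?_⟩
    have hd : dist a ((u n : S) : X) < ε / (L + 1) := by
      rw [Subtype.dist_eq] at hn; exact hn
    have hlf := hfS a haS (u n) (u n).2
    have heq : dist (f a - f w) (f (u n) - f w) = ‖f a - f (u n : X)‖ := by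
      rw [dist_eq_norm]; congr 1; abel
    rw [heq]
    have h5 : L * (ε/(L+1)) < ε := by
      rw [mul_div_assoc'] at *
      rw [div_lt_iff₀ (by linarith)]
      nlinarith
    calc ‖f a - f (u n : X)‖ ≤ L * ‖a - (u n : X)‖ := hlf
      _ = L * dist a ((u n : S) : X) := by rw [dist_eq_norm]
      _ ≤ L * (ε/(L+1)) := by nlinarith [dist_nonneg (x := a) (y := ((u n : S) : X))]
      _ < ε := h5
  have hspan : TopologicalSpace.IsSeparable (Submodule.span ℝ T : Set Y) := hTsep.span
  obtain ⟨c, hc_count, hc_sub⟩ := hspan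
  obtain ⟨y, hy⟩ := Set.Countable.exists_eq_range (hc_count.insert 0) ⟨0, Set.mem_insert _ _⟩
  have hclosure : (Submodule.span ℝ T : Set Y) ⊆ closure (Set.range y) := by
    rw [← hy]; exact hc_sub.trans (closure_mono (Set.subset_insert _ _))
  have hφex : ∀ n, ∃ g : Y →L[ℝ] ℝ, ‖g‖ ≤ 1 ∧ g (y n) = ‖y n‖ := fun n =>
    exists_dual_vector'' ℝ (y n)
  choose φ hφ1 hφ2 using hφex
  -- coordinate functions
  have hlip_n : ∀ n : ℕ, LipschitzOnWith (Real.toNNReal L) (fun a => (φ n) (f a - f w)) S := by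
    intro n
    rw [lipschitzOnWith_iff_dist_le_mul]
    intro a ha b hb
    rw [Real.dist_eq, Real.coe_toNNReal _ hL0]
    have e1 : (φ n) (f a - f w) - (φ n) (f b - f w) = (φ n) (f a - f b) := by
      rw [← map_sub]; congr 1; abel
    rw [e1]
    calc |(φ n) (f a - f b)| ≤ ‖φ n‖ * ‖f a - f b‖ := (φ n).le_opNorm _
      _ ≤ 1 * (L * ‖a - b‖) := by
          apply mul_le_mul (hφ1 n) (hfS a ha b hb) (norm_nonneg _) zero_le_one
      _ = L * dist a b := by rw [one_mul, dist_eq_norm]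
  have hext : ∀ n, ∃ h : X → ℝ, LipschitzWith (Real.toNNReal L) h ∧
      Set.EqOn (fun a => (φ n) (f a - f w)) h S := fun n => (hlip_n n).extend_real
  choose h hh_lip hh_eq using hext
  have hhw : ∀ n, h n w = 0 := fun n => by
    rw [← hh_eq n hwS]; simp
  have hbound : ∀ x' : X, ∀ n, ‖h n x'‖ ≤ L * dist x' w := by
    intro x' n
    have := (hh_lip n).dist_le_mul x' w
    rw [Real.coe_toNNReal _ hL0, Real.dist_eq, hhw n, sub_zero] at this
    rwa [Real.norm_eq_abs]
  have hmem : ∀ x' : X, Memℓp (fun n => h n x') ∞ := fun x' =>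
    memℓp_infty ⟨L * dist x' w, by rintro _ ⟨n, rfl⟩; exact hbound x' n⟩
  set H : X → lp (fun _ : ℕ => ℝ) ∞ := fun x' => ⟨fun n => h n x', hmem x'⟩ with hHdef
  have Happly : ∀ (x' : X) (n : ℕ), (H x') n = h n x' := fun _ _ => rfl
  have hsub : ∀ (a b : X) (n : ℕ), (H a - H b) n = h n a - h n b := by
    intro a b n
    rw [lp.coeFn_sub, Pi.sub_apply, Happly, Happly]
  have hHlip : LipschitzWith (Real.toNNReal L) H := by
    apply LipschitzWith.of_dist_le_mul
    intro a b
    rw [dist_eq_norm, Real.coe_toNNReal _ hL0]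
    apply lp.norm_le_of_forall_le (by positivity : (0:ℝ) ≤ L * dist a b)
    intro n
    rw [hsub a b n]
    have := (hh_lip n).dist_le_mul a b
    rw [Real.coe_toNNReal _ hL0, Real.dist_eq] at this
    rwa [Real.norm_eq_abs]
  -- the isometry property on S
  have hnorm : ∀ z ∈ Submodule.span ℝ T, (⨆ n, ‖(φ n) z‖) = ‖z‖ := fun z hz =>
    norming_sup y φ hφ1 hφ2 (hclosure hz)
  have hiso : ∀ (t s : ℝ) (a b c : X), a ∈ S → b ∈ S → c ∈ S →
      ‖t⁻¹ • (H a - H b) - s⁻¹ • (H c - H b)‖ =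
      ‖t⁻¹ • (f a - f b) - s⁻¹ • (f c - f b)‖ := by
    intro t s a b c haS hbS hcS
    set z : Y := t⁻¹ • (f a - f b) - s⁻¹ • (f c - f b) with hz
    have hmemT : ∀ d ∈ S, f d - f w ∈ Submodule.span ℝ T := fun d hd =>
      Submodule.subset_span ⟨d, hd, rfl⟩
    have hzmem : z ∈ Submodule.span ℝ T := by
      have h1 : f a - f b = (f a - f w) - (f b - f w) := by abel
      have h2 : f c - f b = (f c - f w) - (f b - f w) := by abel
      rw [hz, h1, h2]
      exact Submodule.sub_mem _
        (Submodule.smul_mem _ _ (Submodule.sub_mem _ (hmemT a haS) (hmemT b hbS)))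
        (Submodule.smul_mem _ _ (Submodule.sub_mem _ (hmemT c hcS) (hmemT b hbS)))
    have hcoord : ∀ n, (t⁻¹ • (H a - H b) - s⁻¹ • (H c - H b)) n = (φ n) z := by
      intro n
      rw [lp.coeFn_sub, Pi.sub_apply, lp.coeFn_smul, lp.coeFn_smul, Pi.smul_apply,
        Pi.smul_apply, hsub a b n, hsub c b n]
      rw [← hh_eq n haS, ← hh_eq n hbS, ← hh_eq n hcS]
      simp only [hz, map_sub, map_smul, smul_eq_mul]
      ring
    have hn1 : ‖t⁻¹ • (H a - H b) - s⁻¹ • (H c - H b)‖ = ⨆ n, ‖(φ n) z‖ := by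
      rw [lp.norm_eq_ciSup]
      congr 1
      funext n
      rw [hcoord n]
    rw [hn1, hnorm z hzmem]
  refine ⟨H, hHlip, ?_⟩
  intro x hx hdiff v hv
  have hxG : x ∈ G := hx.1
  have hxS : x ∈ S := hx
  -- the distance function estimate from Gâteaux differentiability
  set e : ℝ → ℝ := fun t => Metric.infDist (x + t • v) G with he
  obtain ⟨D, hD⟩ := hdiff
  have hx0 : Metric.infDist x G = 0 := Metric.infDist_zero_of_mem hxG
  have hDv : Tendsto (fun t : ℝ => t⁻¹ * e t) (𝓝[≠] 0) (𝓝 (D v)) := by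
    have := hD v
    simpa [he, hx0] using this
  have hDv0 : D v = 0 := by
    have hpos : (0:ℝ) ≤ D v := by
      have hmono : 𝓝[>] (0:ℝ) ≤ 𝓝[≠] 0 :=
        nhdsWithin_mono _ (fun t ht => ne_of_gt ht)
      refine ge_of_tendsto (hDv.mono_left hmono) ?_
      filter_upwards [self_mem_nhdsWithin] with t ht
      exact mul_nonneg (inv_nonneg.mpr (le_of_lt ht)) Metric.infDist_nonneg
    have hneg : D v ≤ (0:ℝ) := by
      have hmono : 𝓝[<] (0:ℝ) ≤ 𝓝[≠] 0 :=
        nhdsWithin_mono _ (fun t ht => ne_of_lt ht)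
      refine le_of_tendsto (hDv.mono_left hmono) ?_
      filter_upwards [self_mem_nhdsWithin] with t ht
      have h1 : t⁻¹ ≤ 0 := inv_nonpos.mpr (le_of_lt ht)
      have h2 : (0:ℝ) ≤ e t := Metric.infDist_nonneg
      nlinarith
    linarith
  have htend : Tendsto (fun t => |t|⁻¹ * e t) (𝓝[≠] 0) (𝓝 0) := by
    have h1 : Tendsto (fun t => |t⁻¹ * e t|) (𝓝[≠] 0) (𝓝 0) := by
      have := hDv; rw [hDv0] at this
      simpa using this.abs
    refine h1.congr (fun t => ?_)
    rw [abs_mul, abs_inv, abs_of_nonneg (Metric.infDist_nonneg)]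
  -- choose approximating points in G
  have hGne : G.Nonempty := ⟨w, hw⟩
  have hex : ∀ t : ℝ, 0 < |t| → ∃ p ∈ G, dist (x + t • v) p < e t + t^2 := by
    intro t ht
    apply (Metric.infDist_lt_iff hGne).mp
    have h2 : (0:ℝ) < t^2 := by
      rw [sq, ← abs_mul_abs_self]; exact mul_pos ht ht
    have : e t = Metric.infDist (x + t • v) G := rfl
    linarith
  choose g hgG hgd using hex
  have heb : ∀ t : ℝ, e t ≤ |t| * ‖v‖ := fun t => by
    calc e t ≤ dist (x + t • v) x := Metric.infDist_le_dist_of_mem hxG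
      _ = ‖t • v‖ := by rw [dist_eq_norm, add_sub_cancel_left]
      _ = |t| * ‖v‖ := by rw [norm_smul, Real.norm_eq_abs]
  -- the key approximation estimate
  have key : ∀ η : ℝ, 0 < η → ∃ ε₀ > 0, ∀ t s : ℝ,
      0 < |t| → |t| < ε₀ → 0 < |s| → |s| < ε₀ →
      ‖t⁻¹ • (f (x + t • v) - f x) - s⁻¹ • (f (x + s • v) - f x)‖ ≤
        ‖t⁻¹ • (H (x + t • v) - H x) - s⁻¹ • (H (x + s • v) - H x)‖ + η ∧
      ‖t⁻¹ • (H (x + t • v) - H x) - s⁻¹ • (H (x + s • v) - H x)‖ ≤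
        ‖t⁻¹ • (f (x + t • v) - f x) - s⁻¹ • (f (x + s • v) - f x)‖ + η := by
    intro η hη
    set η' := η / (8 * L) with hη'
    have hη'pos : 0 < η' := by positivity
    obtain ⟨ε₁, hε₁pos, hε₁⟩ : ∃ ε₁ > 0, ∀ t : ℝ, 0 < |t| → |t| < ε₁ → |t|⁻¹ * e t < η' := by
      have h1 := htend.eventually_lt_const hη'pos
      rw [eventually_nhdsWithin_iff, Metric.eventually_nhds_iff] at h1
      obtain ⟨ε₁, hε₁pos, hball⟩ := h1
      refine ⟨ε₁, hε₁pos, fun t ht0 htε => ?_⟩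
      exact hball (by simpa [Real.dist_eq] using htε)
        (Set.mem_compl_singleton_iff.mpr (abs_pos.mp ht0))
    have hxball : dist x w < δ / 4 := hxS.2
    set ρ : ℝ := δ/4 - dist x w with hρ
    have hρpos : 0 < ρ := by rw [hρ]; linarith
    set ε₀ : ℝ := min ε₁ (min η' (min 1 (min (ρ/(2*‖v‖+2)) (δ/(‖v‖+2))))) with hε₀def
    have hε₀pos : 0 < ε₀ := by
      refine lt_min hε₁pos (lt_min hη'pos (lt_min one_pos (lt_min ?_ ?_))) <;> positivity
    -- per-parameter facts
    have hstep : ∀ (t : ℝ) (ht0 : 0 < |t|), |t| < ε₀ →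
        g t ht0 ∈ S ∧ dist (x + t • v) (g t ht0) < δ ∧
        |t|⁻¹ * (L * dist (x + t • v) (g t ht0)) < η / 4 := by
      intro t ht0 htε
      have h1 : |t| < ε₁ := lt_of_lt_of_le htε (min_le_left _ _)
      have h2 : |t| < η' := lt_of_lt_of_le htε
        ((min_le_right _ _).trans (min_le_left _ _))
      have h3 : |t| < 1 := lt_of_lt_of_le htε
        ((min_le_right _ _).trans ((min_le_right _ _).trans (min_le_left _ _)))
      have h4 : |t| < ρ/(2*‖v‖+2) := lt_of_lt_of_le htε
        ((min_le_right _ _).trans ((min_le_right _ _).trans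
          ((min_le_right _ _).trans (min_le_left _ _))))
      have h5 : |t| < δ/(‖v‖+2) := lt_of_lt_of_le htε
        ((min_le_right _ _).trans ((min_le_right _ _).trans
          ((min_le_right _ _).trans (min_le_right _ _))))
      have ht2 : t^2 ≤ |t| := by
        rw [sq, ← abs_mul_abs_self]
        nlinarith
      have hd := hgd t ht0
      have hdb : dist (x + t • v) (g t ht0) < |t| * (‖v‖ + 1) := by
        have hb := heb t
        nlinarith
      have hxx : dist (x + t • v) x = |t| * ‖v‖ := by
        rw [dist_eq_norm, add_sub_cancel_left, norm_smul, Real.norm_eq_abs]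
      refine ⟨⟨hgG t ht0, Metric.mem_ball.mpr ?_⟩, ?_, ?_⟩
      · have hth : dist (g t ht0) w ≤
            dist (g t ht0) (x + t • v) + dist (x + t • v) x + dist x w :=
          dist_triangle4 _ _ _ _
        rw [dist_comm (g t ht0) (x + t • v)] at hth
        have hr : |t| * (2*‖v‖+2) < ρ := by
          rw [lt_div_iff₀ (by positivity)] at h4; linarith
        have hv0 : (0:ℝ) ≤ ‖v‖ := norm_nonneg v
        have ht00 : (0:ℝ) ≤ |t| := abs_nonneg t
        rw [hρ] at hr
        nlinarith
      · have hr : |t| * (‖v‖+2) < δ := by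
          rw [lt_div_iff₀ (by positivity)] at h5; linarith
        have hv0 : (0:ℝ) ≤ ‖v‖ := norm_nonneg v
        have ht00 : (0:ℝ) ≤ |t| := abs_nonneg t
        nlinarith
      · have h6 : |t|⁻¹ * e t < η' := hε₁ t ht0 h1
        have hinv : 0 < |t|⁻¹ := inv_pos.mpr ht0
        have h8 : |t|⁻¹ * t^2 = |t| := by
          rw [sq, ← abs_mul_abs_self, ← mul_assoc, inv_mul_cancel₀ (ne_of_gt ht0), one_mul]
        have h7 : |t|⁻¹ * (L * dist (x + t • v) (g t ht0)) ≤
            L * (|t|⁻¹ * e t + |t|) := by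
          have hdd : dist (x + t • v) (g t ht0) ≤ e t + t^2 := le_of_lt hd
          have := mul_le_mul_of_nonneg_left hdd (le_of_lt hinv)
          calc |t|⁻¹ * (L * dist (x + t • v) (g t ht0))
              = L * (|t|⁻¹ * dist (x + t • v) (g t ht0)) := by ring
            _ ≤ L * (|t|⁻¹ * (e t + t^2)) := by nlinarith
            _ = L * (|t|⁻¹ * e t + |t|⁻¹ * t^2) := by ring
            _ = L * (|t|⁻¹ * e t + |t|) := by rw [h8]
        have h9 : L * (|t|⁻¹ * e t + |t|) < L * (2*η') := by
          apply mul_lt_mul_of_pos_left _ hL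
          linarith
        have h10 : L * (2*η') = η/4 := by
          rw [hη']; field_simp; ring
        linarith
    refine ⟨ε₀, hε₀pos, ?_⟩
    intro t s ht0 htε hs0 hsε
    obtain ⟨hgtS, hgtδ, hrt⟩ := hstep t ht0 htε
    obtain ⟨hgsS, hgsδ, hrs⟩ := hstep s hs0 hsε
    set rt : ℝ := |t|⁻¹ * (L * dist (x + t • v) (g t ht0)) with hrtdef
    set rs : ℝ := |s|⁻¹ * (L * dist (x + s • v) (g s hs0)) with hrsdef
    -- approximation of f-quotients
    have hft : ‖t⁻¹ • (f (x + t • v) - f x) - t⁻¹ • (f (g t ht0) - f x)‖ ≤ rt := by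
      have he1 : t⁻¹ • (f (x + t • v) - f x) - t⁻¹ • (f (g t ht0) - f x) =
          t⁻¹ • (f (x + t • v) - f (g t ht0)) := by
        rw [← smul_sub]; congr 1; abel
      rw [he1, norm_smul, norm_inv, Real.norm_eq_abs, hrtdef]
      have hlf := hf (g t ht0) (hgG t ht0) (x + t • v)
        (by rw [← dist_eq_norm]; exact hgtδ)
      rw [dist_eq_norm]
      have hinv : (0:ℝ) ≤ |t|⁻¹ := inv_nonneg.mpr (abs_nonneg t)
      exact mul_le_mul_of_nonneg_left hlf hinv
    have hfs' : ‖s⁻¹ • (f (x + s • v) - f x) - s⁻¹ • (f (g s hs0) - f x)‖ ≤ rs := by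
      have he1 : s⁻¹ • (f (x + s • v) - f x) - s⁻¹ • (f (g s hs0) - f x) =
          s⁻¹ • (f (x + s • v) - f (g s hs0)) := by
        rw [← smul_sub]; congr 1; abel
      rw [he1, norm_smul, norm_inv, Real.norm_eq_abs, hrsdef]
      have hlf := hf (g s hs0) (hgG s hs0) (x + s • v)
        (by rw [← dist_eq_norm]; exact hgsδ)
      rw [dist_eq_norm]
      have hinv : (0:ℝ) ≤ |s|⁻¹ := inv_nonneg.mpr (abs_nonneg s)
      exact mul_le_mul_of_nonneg_left hlf hinv
    -- approximation of H-quotients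
    have hHt : ‖t⁻¹ • (H (x + t • v) - H x) - t⁻¹ • (H (g t ht0) - H x)‖ ≤ rt := by
      have he1 : t⁻¹ • (H (x + t • v) - H x) - t⁻¹ • (H (g t ht0) - H x) =
          t⁻¹ • (H (x + t • v) - H (g t ht0)) := by
        rw [← smul_sub]; congr 1; abel
      rw [he1, norm_smul, norm_inv, Real.norm_eq_abs, hrtdef]
      have hlH := hHlip.dist_le_mul (x + t • v) (g t ht0)
      rw [Real.coe_toNNReal _ hL0, dist_eq_norm] at hlH
      rw [← dist_eq_norm] at hlH ⊢
      have hinv : (0:ℝ) ≤ |t|⁻¹ := inv_nonneg.mpr (abs_nonneg t)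
      exact mul_le_mul_of_nonneg_left hlH hinv
    have hHs : ‖s⁻¹ • (H (x + s • v) - H x) - s⁻¹ • (H (g s hs0) - H x)‖ ≤ rs := by
      have he1 : s⁻¹ • (H (x + s • v) - H x) - s⁻¹ • (H (g s hs0) - H x) =
          s⁻¹ • (H (x + s • v) - H (g s hs0)) := by
        rw [← smul_sub]; congr 1; abel
      rw [he1, norm_smul, norm_inv, Real.norm_eq_abs, hrsdef]
      have hlH := hHlip.dist_le_mul (x + s • v) (g s hs0)
      rw [Real.coe_toNNReal _ hL0, dist_eq_norm] at hlH
      rw [← dist_eq_norm] at hlH ⊢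
      have hinv : (0:ℝ) ≤ |s|⁻¹ := inv_nonneg.mpr (abs_nonneg s)
      exact mul_le_mul_of_nonneg_left hlH hinv
    -- isometry between inner quotients
    have hIso : ‖t⁻¹ • (H (g t ht0) - H x) - s⁻¹ • (H (g s hs0) - H x)‖ =
        ‖t⁻¹ • (f (g t ht0) - f x) - s⁻¹ • (f (g s hs0) - f x)‖ :=
      hiso t s (g t ht0) x (g s hs0) hgtS hxS hgsS
    -- combine
    have hA := oscDir_aux_triangle (t⁻¹ • (f (x + t • v) - f x)) (s⁻¹ • (f (x + s • v) - f x))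
      (t⁻¹ • (f (g t ht0) - f x)) (s⁻¹ • (f (g s hs0) - f x)) rt rs hft hfs'
    have hB := oscDir_aux_triangle (t⁻¹ • (H (x + t • v) - H x)) (s⁻¹ • (H (x + s • v) - H x))
      (t⁻¹ • (H (g t ht0) - H x)) (s⁻¹ • (H (g s hs0) - H x)) rt rs hHt hHs
    rw [hIso] at hB
    have hA1 := abs_le.mp hA
    have hB1 := abs_le.mp hB
    constructor <;> [skip; skip] <;>
      · obtain ⟨hA2, hA3⟩ := hA1
        obtain ⟨hB2, hB3⟩ := hB1
        linarith
  -- conclude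
  have k1 : ∀ η : ℝ, 0 < η → ∃ ε₀ > 0, ∀ t s : ℝ,
      0 < |t| → |t| < ε₀ → 0 < |s| → |s| < ε₀ →
      ‖t⁻¹ • (f (x + t • v) - f x) - s⁻¹ • (f (x + s • v) - f x)‖ ≤
        ‖t⁻¹ • (H (x + t • v) - H x) - s⁻¹ • (H (x + s • v) - H x)‖ + η := by
    intro η hη
    obtain ⟨ε₀, h1, h2⟩ := key η hη
    exact ⟨ε₀, h1, fun t s a b c' d => (h2 t s a b c' d).1⟩
  have k2 : ∀ η : ℝ, 0 < η → ∃ ε₀ > 0, ∀ t s : ℝ,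
      0 < |t| → |t| < ε₀ → 0 < |s| → |s| < ε₀ →
      ‖t⁻¹ • (H (x + t • v) - H x) - s⁻¹ • (H (x + s • v) - H x)‖ ≤
        ‖t⁻¹ • (f (x + t • v) - f x) - s⁻¹ • (f (x + s • v) - f x)‖ + η := by
    intro η hη
    obtain ⟨ε₀, h1, h2⟩ := key η hη
    exact ⟨ε₀, h1, fun t s a b c' d => (h2 t s a b c' d).2⟩
  exact le_antisymm (oscDir_le_of_approx f H x v k1) (oscDir_le_of_approx H f x v k2)
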